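/- Under the posterior π(κ | x, τ) ∝ κ^{a-1/2}(1-κ)^{-a-1} L((1/τ²)(1/κ-1)) e^{-κx²/2}, for any fixed τ > 0 and fixed η, δ ∈ (0,1), P(κ > η | x, τ) ≤ H(a,η,δ) e^{-η(1-δ)x²/2} / (τ^{2a} Δ(τ²,η,δ)) uniformly in x ∈ ℝ, where H(a,η,δ) = (a+1/2)(1-ηδ)^a / (K(ηδ)^{a+1/2}) and Δ(τ²,η,δ) = ξ(τ²,η,δ) L((1/τ²)(1/(ηδ)-1)), with ξ(τ²,η,δ) = (∫_{(1/τ²)(1/(ηδ)-1)}^∞ t^{-(a+3/2)} L(t) dt) / ((a+1/2)^{-1} ((1/τ²)(1/(ηδ)-1))^{-(a+1/2)} L((1/τ²)(1/(ηδ)-1))). -/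

import Mathlib

open MeasureTheory Filter Set Topology

set_option maxHeartbeats 1000000



lemma cv_image (τ b : ℝ) (hτ : 0 < τ) (hb : 0 ≤ b) :
    (fun t : ℝ => (1 + τ^2*t)⁻¹) '' Ioi b = Ioo 0 ((1 + τ^2*b)⁻¹) := by
  have hτ2 : 0 < τ^2 := by positivity
  ext κ
  constructor
  · rintro ⟨t, ht, rfl⟩
    have ht' : b < t := ht
    have h1 : (0:ℝ) < 1 + τ^2*b := by nlinarith
    have h2 : (0:ℝ) < 1 + τ^2*t := by nlinarith
    constructor
    · positivity
    · apply inv_strictAnti₀ h1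
      nlinarith
  · rintro ⟨h0, h1⟩
    have h1b : (0:ℝ) < 1 + τ^2*b := by nlinarith
    refine ⟨(κ⁻¹ - 1)/τ^2, ?_, ?_⟩
    · have : 1 + τ^2*b < κ⁻¹ := by
        have := (inv_strictAnti₀ h0 h1)
        rwa [inv_inv] at this
      simp only [mem_Ioi]
      rw [lt_div_iff₀ hτ2]
      nlinarith
    · show (1 + τ^2 * ((κ⁻¹ - 1)/τ^2))⁻¹ = κ
      rw [mul_div_cancel₀ _ (by positivity : (τ:ℝ)^2 ≠ 0)]
      simp [sub_add_cancel, inv_inv]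

lemma cv_deriv (τ b : ℝ) (hτ : 0 < τ) (hb : 0 ≤ b) :
    ∀ t ∈ Ioi b, HasDerivWithinAt (fun t : ℝ => (1 + τ^2*t)⁻¹)
      (-(τ^2) / (1 + τ^2*t)^2) (Ioi b) t := by
  intro t ht
  have ht' : b < t := ht
  have h2 : (1 + τ^2*t) ≠ 0 := by nlinarith
  have : HasDerivAt (fun t : ℝ => (1 + τ^2*t)⁻¹) (-(τ^2) / (1 + τ^2*t)^2) t := by
    have h := ((hasDerivAt_id t).const_mul (τ^2)).const_add 1
    simpa [Pi.inv_def] using h.inv h2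
  exact this.hasDerivWithinAt

lemma cv_inj (τ b : ℝ) (hτ : 0 < τ) (hb : 0 ≤ b) :
    InjOn (fun t : ℝ => (1 + τ^2*t)⁻¹) (Ioi b) := by
  intro s hs t ht h
  have hs' : (0:ℝ) < 1 + τ^2*s := by have := mem_Ioi.mp hs; nlinarith
  have ht' : (0:ℝ) < 1 + τ^2*t := by have := mem_Ioi.mp ht; nlinarith
  simp only at h
  have := congrArg (·⁻¹) h
  simp only [inv_inv] at this
  have hτ2 : (0:ℝ) < τ^2 := by positivity
  nlinarith


lemma cv_pointwise (a τ t : ℝ) (hτ : 0 < τ) (ht : 0 < t) (L : ℝ → ℝ) :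
    |(-(τ^2) / (1 + τ^2*t)^2)| *
      (((1+τ^2*t)⁻¹) ^ (a - 1/2) * (1 - (1+τ^2*t)⁻¹) ^ (-a-1) *
        L ((1/τ^2) * (1/(1+τ^2*t)⁻¹ - 1)))
    = (τ^2) ^ (-a) * ((1+τ^2*t) ^ (-(1/2):ℝ) * (t ^ (-a-1) * L t)) := by
  have hτ2 : (0:ℝ) < τ^2 := by positivity
  have hu : (0:ℝ) < 1+τ^2*t := by nlinarith
  have habs : |(-(τ^2) / (1 + τ^2*t)^2)| = τ^2 * (1+τ^2*t) ^ (-(2:ℝ)) := by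
    rw [abs_div, abs_neg, abs_of_pos hτ2, abs_of_pos (by positivity), div_eq_mul_inv,
      ← Real.rpow_natCast (1+τ^2*t) 2, ← Real.rpow_neg hu.le]
    norm_num
  have hLarg : (1/τ^2) * (1/(1+τ^2*t)⁻¹ - 1) = t := by
    field_simp
    ring
  have h1 : ((1+τ^2*t)⁻¹) ^ (a - 1/2) = (1+τ^2*t) ^ (-(a-1/2)) := by
    rw [Real.inv_rpow hu.le, ← Real.rpow_neg hu.le]
  have h2 : 1 - (1+τ^2*t)⁻¹ = (τ^2*t)/(1+τ^2*t) := by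
    field_simp
    ring
  have h3 : ((τ^2*t)/(1+τ^2*t)) ^ (-a-1)
      = (τ^2)^(-a-1) * t^(-a-1) * (1+τ^2*t)^(a+1) := by
    rw [Real.div_rpow (by positivity) hu.le, Real.mul_rpow hτ2.le ht.le, div_eq_mul_inv,
      ← Real.rpow_neg hu.le]
    ring_nf
  have e1 : τ^2 * (τ^2)^(-a-1) = (τ^2)^(-a) := by
    nth_rewrite 1 [← Real.rpow_one (τ^2)]
    rw [← Real.rpow_add hτ2]; norm_num
  have e2 : (1+τ^2*t)^(-(2:ℝ)) * ((1+τ^2*t)^(-(a-1/2)) * (1+τ^2*t)^(a+1))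
      = (1+τ^2*t)^(-(1/2):ℝ) := by
    rw [← Real.rpow_add hu, ← Real.rpow_add hu]; congr 1; ring
  calc |(-(τ^2) / (1 + τ^2*t)^2)| *
      (((1+τ^2*t)⁻¹) ^ (a - 1/2) * (1 - (1+τ^2*t)⁻¹) ^ (-a-1) *
        L ((1/τ^2) * (1/(1+τ^2*t)⁻¹ - 1)))
      = (τ^2 * (τ^2)^(-a-1)) *
        ((1+τ^2*t)^(-(2:ℝ)) * ((1+τ^2*t)^(-(a-1/2)) * (1+τ^2*t)^(a+1))) *
        (t^(-a-1) * L t) := by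
        rw [habs, hLarg, h1, h2, h3]; ring
    _ = (τ^2) ^ (-a) * ((1+τ^2*t) ^ (-(1/2):ℝ) * (t ^ (-a-1) * L t)) := by
        rw [e1, e2]; ring

lemma cv_integral (a τ : ℝ) (hτ : 0 < τ) (L : ℝ → ℝ) (b : ℝ) (hb : 0 ≤ b) :
    ∫ κ in Ioo (0:ℝ) ((1+τ^2*b)⁻¹),
        κ ^ (a - 1/2) * (1-κ) ^ (-a-1) * L ((1/τ^2) * (1/κ - 1))
    = ∫ t in Ioi b, (τ^2) ^ (-a) * ((1+τ^2*t) ^ (-(1/2):ℝ) * (t ^ (-a-1) * L t)) := by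
  rw [← cv_image τ b hτ hb,
    integral_image_eq_integral_abs_deriv_smul measurableSet_Ioi
      (cv_deriv τ b hτ hb) (cv_inj τ b hτ hb)]
  refine setIntegral_congr_fun measurableSet_Ioi (fun t ht => ?_)
  have ht0 : 0 < t := lt_of_le_of_lt hb ht
  simpa [smul_eq_mul] using cv_pointwise a τ t hτ ht0 L

lemma cv_integrable (a τ : ℝ) (hτ : 0 < τ) (L : ℝ → ℝ) (b : ℝ) (hb : 0 ≤ b)
    (h : IntegrableOn (fun t => (τ^2) ^ (-a) * ((1+τ^2*t) ^ (-(1/2):ℝ) * (t ^ (-a-1) * L t)))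
      (Ioi b)) :
    IntegrableOn (fun κ => κ ^ (a - 1/2) * (1-κ) ^ (-a-1) * L ((1/τ^2) * (1/κ - 1)))
      (Ioo (0:ℝ) ((1+τ^2*b)⁻¹)) := by
  rw [← cv_image τ b hτ hb,
    integrableOn_image_iff_integrableOn_abs_deriv_smul measurableSet_Ioi
      (cv_deriv τ b hτ hb) (cv_inj τ b hτ hb)]
  refine h.congr_fun (fun t ht => ?_) measurableSet_Ioi
  have ht0 : 0 < t := lt_of_le_of_lt hb ht
  simpa [smul_eq_mul] using (cv_pointwise a τ t hτ ht0 L).symm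


/-- The unnormalized posterior density of the shrinkage coefficient `κ ∈ (0,1)`
given observation `x` and global parameter `τ`. -/
noncomputable def postDens (a : ℝ) (L : ℝ → ℝ) (τ x κ : ℝ) : ℝ :=
  κ ^ (a - 1/2) * (1 - κ) ^ (-a - 1) * L ((1 / τ ^ 2) * (1 / κ - 1)) *
    Real.exp (-(κ * x ^ 2) / 2)

/-- Theorem 4.3 (second concentration inequality): for any fixed `τ > 0` and
fixed `η, δ ∈ (0,1)`,
`P(κ > η | x, τ) ≤ H(a,η,δ) e^{-η(1-δ)x²/2} / (τ^{2a} Δ(τ²,η,δ))`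
uniformly in `x ∈ ℝ`. -/
theorem concentration_ineq_two (a K : ℝ) (ha : 0 < a) (hK : 0 < K) (L : ℝ → ℝ)
    (hLmeas : Measurable L)
    (hLpos : ∀ t > 0, 0 < L t)
    (hnorm : K * ∫ t in Ioi (0:ℝ), t ^ (-a - 1) * L t = 1)
    (η δ τ : ℝ) (hη : η ∈ Ioo (0:ℝ) 1) (hδ : δ ∈ Ioo (0:ℝ) 1) (hτ : 0 < τ)
    (x : ℝ) :
    (∫ κ in Ioo η 1, postDens a L τ x κ) /
        (∫ κ in Ioo (0:ℝ) 1, postDens a L τ x κ) ≤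
      ((a + 1/2) * (1 - η * δ) ^ a / (K * (η * δ) ^ (a + 1/2))) *
          Real.exp (-(η * (1 - δ) * x ^ 2) / 2) /
        (τ ^ (2 * a) *
          (((∫ t in Ioi ((1 / τ ^ 2) * (1 / (η * δ) - 1)), t ^ (-(a + 3/2)) * L t) /
              ((a + 1/2)⁻¹ * ((1 / τ ^ 2) * (1 / (η * δ) - 1)) ^ (-(a + 1/2)) *
                L ((1 / τ ^ 2) * (1 / (η * δ) - 1)))) *
            L ((1 / τ ^ 2) * (1 / (η * δ) - 1)))) := by
  obtain ⟨hη0, hη1⟩ := hη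
  obtain ⟨hδ0, hδ1⟩ := hδ
  have hτ2 : (0:ℝ) < τ^2 := by positivity
  have hηδ : 0 < η * δ := by positivity
  have hηδ1 : η * δ < 1 := by nlinarith
  have hmδ : (0:ℝ) < 1 - η * δ := by linarith
  set s : ℝ := (1 / τ ^ 2) * (1 / (η * δ) - 1) with hs_def
  have h1ηδ : 1 < 1 / (η * δ) := by rw [lt_div_iff₀ hηδ, one_mul]; exact hηδ1
  have hs : 0 < s := mul_pos (by positivity) (by linarith)
  have hτs : 1 + τ^2 * s = (η*δ)⁻¹ := by
    rw [hs_def]; field_simp; ring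
  have hsinv : (1 + τ^2*s)⁻¹ = η*δ := by rw [hτs, inv_inv]
  have hs_eq : s = (1 - η*δ) / (τ^2 * (η*δ)) := by
    rw [hs_def]; field_simp
  -- basic functions
  set ψ : ℝ → ℝ := fun t => t ^ (-a - 1) * L t with hψ_def
  set g : ℝ → ℝ := fun κ => κ ^ (a - 1/2) * (1 - κ) ^ (-a - 1) *
    L ((1 / τ ^ 2) * (1 / κ - 1)) with hg_def
  set φ : ℝ → ℝ := fun t =>
    (τ^2) ^ (-a) * ((1 + τ^2*t) ^ (-(1/2):ℝ) * ψ t) with hφ_def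
  -- integrability of ψ
  have hψint : IntegrableOn ψ (Ioi 0) := by
    by_contra h
    rw [integral_undef h, mul_zero] at hnorm
    norm_num at hnorm
  have hInorm : ∫ t in Ioi (0:ℝ), ψ t = K⁻¹ := by
    rw [mul_comm] at hnorm; exact eq_inv_of_mul_eq_one_left hnorm
  have hψnn : ∀ t ∈ Ioi (0:ℝ), 0 ≤ ψ t := fun t ht =>
    mul_nonneg (Real.rpow_nonneg (le_of_lt ht) _) (hLpos t ht).le
  have hφmeas : Measurable φ := by
    rw [hφ_def, hψ_def]; fun_prop
  have hφnn : ∀ t ∈ Ioi (0:ℝ), 0 ≤ φ t := by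
    intro t ht
    have ht0 : (0:ℝ) < t := ht
    exact mul_nonneg (Real.rpow_nonneg hτ2.le _)
      (mul_nonneg (Real.rpow_nonneg (by nlinarith) _) (hψnn t ht))
  have hφle : ∀ t ∈ Ioi (0:ℝ), φ t ≤ (τ^2)^(-a) * ψ t := by
    intro t ht
    have ht0 : (0:ℝ) < t := ht
    have h1 : (1+τ^2*t) ^ (-(1/2):ℝ) ≤ 1 :=
      Real.rpow_le_one_of_one_le_of_nonpos (by nlinarith) (by norm_num)
    calc φ t = (τ^2)^(-a) * ((1 + τ^2*t) ^ (-(1/2):ℝ) * ψ t) := rfl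
      _ ≤ (τ^2)^(-a) * (1 * ψ t) := by
          apply mul_le_mul_of_nonneg_left _ (Real.rpow_nonneg hτ2.le _)
          exact mul_le_mul_of_nonneg_right h1 (hψnn t ht)
      _ = (τ^2)^(-a) * ψ t := by rw [one_mul]
  have hφint : IntegrableOn φ (Ioi 0) := by
    apply Integrable.mono (hψint.const_mul ((τ^2)^(-a))) hφmeas.aestronglyMeasurable
    filter_upwards [ae_restrict_mem measurableSet_Ioi] with t ht
    rw [Real.norm_eq_abs, Real.norm_eq_abs, abs_of_nonneg (hφnn t ht),
      abs_of_nonneg (mul_nonneg (Real.rpow_nonneg hτ2.le _) (hψnn t ht))]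
    exact hφle t ht
  have hIφ_le : ∫ t in Ioi (0:ℝ), φ t ≤ (τ^2)^(-a) * K⁻¹ := by
    rw [← hInorm, ← integral_const_mul]
    apply integral_mono_of_nonneg
    · filter_upwards [ae_restrict_mem measurableSet_Ioi] with t ht using hφnn t ht
    · exact hψint.const_mul _
    · filter_upwards [ae_restrict_mem measurableSet_Ioi] with t ht using hφle t ht
  -- change of variables
  have hgint : IntegrableOn g (Ioo (0:ℝ) 1) := by
    have h := cv_integrable a τ hτ L 0 le_rfl (by exact hφint)
    rw [show ((1:ℝ)+τ^2*0)⁻¹ = 1 by norm_num] at h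
    exact h
  have hcv0 : ∫ κ in Ioo (0:ℝ) 1, g κ = ∫ t in Ioi (0:ℝ), φ t := by
    have h := cv_integral a τ hτ L 0 le_rfl
    rw [show ((1:ℝ)+τ^2*0)⁻¹ = 1 by norm_num] at h
    exact h
  have hcvs : ∫ κ in Ioo (0:ℝ) (η*δ), g κ = ∫ t in Ioi s, φ t := by
    have h := cv_integral a τ hτ L s hs.le
    rw [hsinv] at h
    exact h
  -- the integral J
  set J : ℝ := ∫ t in Ioi s, t ^ (-(a + 3/2)) * L t with hJ_def
  have hJf_nn : ∀ t ∈ Ioi s, 0 ≤ t ^ (-(a + 3/2)) * L t := by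
    intro t ht
    have ht0 : 0 < t := hs.trans ht
    exact mul_nonneg (Real.rpow_nonneg ht0.le _) (hLpos t ht0).le
  have hJf_le : ∀ t ∈ Ioi s, t ^ (-(a + 3/2)) * L t ≤ s ^ (-(1/2):ℝ) * ψ t := by
    intro t ht
    have ht' : s < t := ht
    have ht0 : 0 < t := hs.trans ht
    have hsplit : t ^ (-(a + 3/2)) = t ^ (-(1/2):ℝ) * t ^ (-a-1) := by
      rw [← Real.rpow_add ht0]; congr 1; ring
    have hmono : t ^ (-(1/2):ℝ) ≤ s ^ (-(1/2):ℝ) :=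
      Real.rpow_le_rpow_of_nonpos hs ht'.le (by norm_num)
    calc t ^ (-(a + 3/2)) * L t = t ^ (-(1/2):ℝ) * (t ^ (-a-1) * L t) := by
          rw [hsplit]; ring
      _ ≤ s ^ (-(1/2):ℝ) * (t ^ (-a-1) * L t) := by
          apply mul_le_mul_of_nonneg_right hmono
          exact mul_nonneg (Real.rpow_nonneg ht0.le _) (hLpos t ht0).le
      _ = s ^ (-(1/2):ℝ) * ψ t := rfl
  have hψintS : IntegrableOn ψ (Ioi s) := hψint.mono_set (Ioi_subset_Ioi hs.le)
  have hJint : IntegrableOn (fun t => t ^ (-(a + 3/2)) * L t) (Ioi s) := by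
    apply Integrable.mono (hψintS.const_mul (s ^ (-(1/2):ℝ)))
    · exact (Measurable.aestronglyMeasurable (by fun_prop))
    · filter_upwards [ae_restrict_mem measurableSet_Ioi] with t ht
      rw [Real.norm_eq_abs, Real.norm_eq_abs, abs_of_nonneg (hJf_nn t ht),
        abs_of_nonneg (mul_nonneg (Real.rpow_nonneg hs.le _) (hψnn t (hs.trans ht)))]
      exact hJf_le t ht
  have hJpos : 0 < J := by
    rw [hJ_def, setIntegral_pos_iff_support_of_nonneg_ae _ hJint]
    · have hsub : Ioi s ⊆ Function.support (fun t => t ^ (-(a + 3/2)) * L t) ∩ Ioi s := by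
        intro t ht
        have ht0 : 0 < t := hs.trans ht
        refine ⟨?_, ht⟩
        have : 0 < t ^ (-(a + 3/2)) * L t :=
          mul_pos (Real.rpow_pos_of_pos ht0 _) (hLpos t ht0)
        exact ne_of_gt this
      refine lt_of_lt_of_le ?_ (measure_mono hsub)
      rw [Real.volume_Ioi]
      norm_num
    · filter_upwards [ae_restrict_mem measurableSet_Ioi] with t ht using hJf_nn t ht
  -- properties of postDens and g on (0,1)
  have hargpos : ∀ κ ∈ Ioo (0:ℝ) 1, 0 < (1 / τ ^ 2) * (1 / κ - 1) := by
    intro κ hκ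
    have h1 : 1 < 1 / κ := by rw [lt_div_iff₀ hκ.1, one_mul]; exact hκ.2
    exact mul_pos (by positivity) (by linarith)
  have hgnn : ∀ κ ∈ Ioo (0:ℝ) 1, 0 ≤ g κ := by
    intro κ hκ
    exact mul_nonneg (mul_nonneg (Real.rpow_nonneg hκ.1.le _)
      (Real.rpow_nonneg (by linarith [hκ.2]) _)) (hLpos _ (hargpos κ hκ)).le
  have hpd_eq : ∀ κ, postDens a L τ x κ = g κ * Real.exp (-(κ * x ^ 2) / 2) :=
    fun κ => rfl
  have hpd_nn : ∀ κ ∈ Ioo (0:ℝ) 1, 0 ≤ postDens a L τ x κ := by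
    intro κ hκ
    rw [hpd_eq]
    exact mul_nonneg (hgnn κ hκ) (Real.exp_pos _).le
  have hpdmeas : Measurable (postDens a L τ x) := by
    have : postDens a L τ x = fun κ => κ ^ (a - 1/2) * (1 - κ) ^ (-a - 1) *
        L ((1 / τ ^ 2) * (1 / κ - 1)) * Real.exp (-(κ * x ^ 2) / 2) := rfl
    rw [this]; fun_prop
  have hpdint : IntegrableOn (postDens a L τ x) (Ioo (0:ℝ) 1) := by
    apply Integrable.mono hgint hpdmeas.aestronglyMeasurable
    filter_upwards [ae_restrict_mem measurableSet_Ioo] with κ hκ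
    rw [Real.norm_eq_abs, Real.norm_eq_abs, abs_of_nonneg (hpd_nn κ hκ),
      abs_of_nonneg (hgnn κ hκ), hpd_eq]
    calc g κ * Real.exp (-(κ * x ^ 2) / 2) ≤ g κ * 1 := by
          apply mul_le_mul_of_nonneg_left _ (hgnn κ hκ)
          rw [Real.exp_le_one_iff]
          have := hκ.1
          nlinarith [sq_nonneg x]
      _ = g κ := mul_one _
  -- numerator bound
  set E1 : ℝ := Real.exp (-(η * x ^ 2) / 2) with hE1_def
  set E2 : ℝ := Real.exp (-(η * δ * x ^ 2) / 2) with hE2_def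
  have hsub_η : Ioo η 1 ⊆ Ioo (0:ℝ) 1 := Ioo_subset_Ioo hη0.le le_rfl
  have hN : (∫ κ in Ioo η 1, postDens a L τ x κ) ≤ E1 * ((τ^2)^(-a) * K⁻¹) := by
    have step1 : (∫ κ in Ioo η 1, postDens a L τ x κ) ≤ ∫ κ in Ioo η 1, E1 * g κ := by
      apply integral_mono_of_nonneg
      · filter_upwards [ae_restrict_mem measurableSet_Ioo] with κ hκ using
          hpd_nn κ (hsub_η hκ)
      · exact (hgint.mono_set hsub_η).const_mul _
      · filter_upwards [ae_restrict_mem measurableSet_Ioo] with κ hκ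
        have h1 : Real.exp (-(κ * x ^ 2) / 2) ≤ E1 := by
          rw [hE1_def, Real.exp_le_exp]
          have := hκ.1
          nlinarith [sq_nonneg x]
        rw [hpd_eq]
        calc g κ * Real.exp (-(κ * x ^ 2) / 2) ≤ g κ * E1 :=
              mul_le_mul_of_nonneg_left h1 (hgnn κ (hsub_η hκ))
          _ = E1 * g κ := mul_comm _ _
    have step3 : (∫ κ in Ioo η 1, g κ) ≤ ∫ κ in Ioo (0:ℝ) 1, g κ := by
      apply setIntegral_mono_set hgint
      · filter_upwards [ae_restrict_mem measurableSet_Ioo] with κ hκ using hgnn κ hκ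
      · exact HasSubset.Subset.eventuallyLE hsub_η
    calc (∫ κ in Ioo η 1, postDens a L τ x κ) ≤ ∫ κ in Ioo η 1, E1 * g κ := step1
      _ = E1 * ∫ κ in Ioo η 1, g κ := integral_const_mul _ _
      _ ≤ E1 * ∫ κ in Ioo (0:ℝ) 1, g κ :=
          mul_le_mul_of_nonneg_left step3 (Real.exp_pos _).le
      _ = E1 * ∫ t in Ioi (0:ℝ), φ t := by rw [hcv0]
      _ ≤ E1 * ((τ^2)^(-a) * K⁻¹) :=
          mul_le_mul_of_nonneg_left hIφ_le (Real.exp_pos _).le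
  -- denominator bound
  have hsub_δ : Ioo (0:ℝ) (η*δ) ⊆ Ioo (0:ℝ) 1 := Ioo_subset_Ioo le_rfl hηδ1.le
  have hφ_ge : ∀ t ∈ Ioi s,
      (τ^2)^(-a) * (τ⁻¹ * (1-η*δ) ^ ((1:ℝ)/2)) * (t ^ (-(a + 3/2)) * L t) ≤ φ t := by
    intro t ht
    have ht' : s < t := ht
    have ht0 : 0 < t := hs.trans ht
    have hu : (0:ℝ) < 1 + τ^2*t := by nlinarith
    have hτ2s : τ^2 * s = (η*δ)⁻¹ - 1 := by linarith [hτs]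
    have hkey : 1 + τ^2*t ≤ τ^2*t/(1-η*δ) := by
      rw [le_div_iff₀ hmδ]
      have h2 : η*δ*(τ^2*s) ≤ η*δ*(τ^2*t) :=
        mul_le_mul_of_nonneg_left (mul_le_mul_of_nonneg_left ht'.le hτ2.le) hηδ.le
      have h3 : η*δ*(τ^2*s) = 1 - η*δ := by
        rw [hτ2s, mul_sub, mul_inv_cancel₀ (ne_of_gt hηδ), mul_one]
      nlinarith
    have key2 : (τ^2*t/(1-η*δ)) ^ (-(1/2):ℝ) ≤ (1+τ^2*t) ^ (-(1/2):ℝ) :=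
      Real.rpow_le_rpow_of_nonpos hu hkey (by norm_num)
    have e1 : ((τ:ℝ)^2) ^ (-(1/2):ℝ) = τ⁻¹ := by
      rw [← Real.rpow_natCast τ 2, ← Real.rpow_mul hτ.le]
      norm_num
      exact (Real.rpow_neg_one τ).trans rfl
    have e2 : ((1:ℝ)-η*δ) ^ (-(1/2):ℝ) = ((1-η*δ) ^ ((1:ℝ)/2))⁻¹ := by
      rw [show (-(1/2):ℝ) = -(1/2) by norm_num, Real.rpow_neg hmδ.le]
    have key3 : (τ^2*t/(1-η*δ)) ^ (-(1/2):ℝ)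
        = τ⁻¹ * (1-η*δ) ^ ((1:ℝ)/2) * t ^ (-(1/2):ℝ) := by
      rw [Real.div_rpow (by positivity) hmδ.le, Real.mul_rpow hτ2.le ht0.le, e1, e2]
      field_simp
    have key4 : t ^ (-(1/2):ℝ) * ψ t = t ^ (-(a + 3/2)) * L t := by
      show t ^ (-(1/2):ℝ) * (t ^ (-a-1) * L t) = _
      rw [show (-(a + 3/2)) = (-(1/2):ℝ) + (-a-1) by ring, Real.rpow_add ht0]
      ring
    calc (τ^2)^(-a) * (τ⁻¹ * (1-η*δ) ^ ((1:ℝ)/2)) * (t ^ (-(a + 3/2)) * L t)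
        = (τ^2)^(-a) * ((τ⁻¹ * (1-η*δ) ^ ((1:ℝ)/2) * t ^ (-(1/2):ℝ)) * ψ t) := by
          rw [← key4]; ring
      _ = (τ^2)^(-a) * ((τ^2*t/(1-η*δ)) ^ (-(1/2):ℝ) * ψ t) := by rw [key3]
      _ ≤ (τ^2)^(-a) * ((1+τ^2*t) ^ (-(1/2):ℝ) * ψ t) := by
          apply mul_le_mul_of_nonneg_left _ (Real.rpow_nonneg hτ2.le _)
          exact mul_le_mul_of_nonneg_right key2 (hψnn t ht0)
      _ = φ t := rfl
  have hφintS : IntegrableOn φ (Ioi s) := hφint.mono_set (Ioi_subset_Ioi hs.le)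
  have hD : E2 * ((τ^2)^(-a) * (τ⁻¹ * (1-η*δ) ^ ((1:ℝ)/2)) * J) ≤
      ∫ κ in Ioo (0:ℝ) 1, postDens a L τ x κ := by
    have step0 : (∫ κ in Ioo (0:ℝ) (η*δ), postDens a L τ x κ) ≤
        ∫ κ in Ioo (0:ℝ) 1, postDens a L τ x κ := by
      apply setIntegral_mono_set hpdint
      · filter_upwards [ae_restrict_mem measurableSet_Ioo] with κ hκ using hpd_nn κ hκ
      · exact HasSubset.Subset.eventuallyLE hsub_δ
    have step1 : (∫ κ in Ioo (0:ℝ) (η*δ), E2 * g κ) ≤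
        ∫ κ in Ioo (0:ℝ) (η*δ), postDens a L τ x κ := by
      apply integral_mono_of_nonneg
      · filter_upwards [ae_restrict_mem measurableSet_Ioo] with κ hκ using
          mul_nonneg (Real.exp_pos _).le (hgnn κ (hsub_δ hκ))
      · exact hpdint.mono_set hsub_δ
      · filter_upwards [ae_restrict_mem measurableSet_Ioo] with κ hκ
        have h1 : E2 ≤ Real.exp (-(κ * x ^ 2) / 2) := by
          rw [hE2_def, Real.exp_le_exp]
          have := hκ.2
          nlinarith [sq_nonneg x]
        rw [hpd_eq, mul_comm E2 (g κ)]
        exact mul_le_mul_of_nonneg_left h1 (hgnn κ (hsub_δ hκ))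
    have step3 : (τ^2)^(-a) * (τ⁻¹ * (1-η*δ) ^ ((1:ℝ)/2)) * J ≤ ∫ t in Ioi s, φ t := by
      rw [hJ_def, ← integral_const_mul]
      apply integral_mono_of_nonneg
      · filter_upwards [ae_restrict_mem measurableSet_Ioi] with t ht using
          mul_nonneg (mul_nonneg (Real.rpow_nonneg hτ2.le _)
            (mul_nonneg (inv_pos.mpr hτ).le (Real.rpow_nonneg hmδ.le _)))
          (hJf_nn t ht)
      · exact hφintS
      · filter_upwards [ae_restrict_mem measurableSet_Ioi] with t ht using hφ_ge t ht
    calc E2 * ((τ^2)^(-a) * (τ⁻¹ * (1-η*δ) ^ ((1:ℝ)/2)) * J)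
        ≤ E2 * ∫ t in Ioi s, φ t :=
          mul_le_mul_of_nonneg_left step3 (Real.exp_pos _).le
      _ = E2 * ∫ κ in Ioo (0:ℝ) (η*δ), g κ := by rw [hcvs]
      _ = ∫ κ in Ioo (0:ℝ) (η*δ), E2 * g κ := (integral_const_mul _ _).symm
      _ ≤ ∫ κ in Ioo (0:ℝ) (η*δ), postDens a L τ x κ := step1
      _ ≤ ∫ κ in Ioo (0:ℝ) 1, postDens a L τ x κ := step0
  -- combine
  have hNnn : 0 ≤ ∫ κ in Ioo η 1, postDens a L τ x κ :=
    setIntegral_nonneg measurableSet_Ioo (fun κ hκ => hpd_nn κ (hsub_η hκ))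
  have hA0 : (0:ℝ) ≤ E1 * ((τ^2)^(-a) * K⁻¹) := by positivity
  have hBpos : (0:ℝ) < E2 * ((τ^2)^(-a) * (τ⁻¹ * (1-η*δ) ^ ((1:ℝ)/2)) * J) := by
    exact mul_pos (Real.exp_pos _) (mul_pos (mul_pos (Real.rpow_pos_of_pos hτ2 _)
      (mul_pos (inv_pos.mpr hτ) (Real.rpow_pos_of_pos hmδ _))) hJpos)
  refine le_trans (div_le_div₀ hA0 hN hBpos hD) (le_of_eq ?_)
  -- final algebraic identity
  have hLs : 0 < L s := hLpos s hs
  have hτ2a : ((τ:ℝ)^2)^a = τ ^ (2*a) := by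
    rw [← Real.rpow_natCast τ 2, ← Real.rpow_mul hτ.le]
    norm_num
  have hτhalf : ((τ:ℝ)^2) ^ (a + 1/2) = (τ^2)^a * τ := by
    rw [Real.rpow_add hτ2]
    congr 1
    rw [← Real.rpow_natCast τ 2, ← Real.rpow_mul hτ.le]
    norm_num
  have hsP : s ^ (-(a+1/2)) = (1-η*δ) ^ (-(a+1/2)) * ((τ^2) ^ (a+1/2) * (η*δ) ^ (a+1/2)) := by
    rw [hs_eq, Real.div_rpow hmδ.le (by positivity : (0:ℝ) ≤ τ^2*(η*δ)),
      div_eq_mul_inv, ← Real.rpow_neg (by positivity : (0:ℝ) ≤ τ^2*(η*δ)), neg_neg,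
      Real.mul_rpow hτ2.le hηδ.le]
  have hone : (1-η*δ) ^ a * (1-η*δ) ^ (-(a+1/2)) * (1-η*δ) ^ ((1:ℝ)/2) = 1 := by
    rw [← Real.rpow_add hmδ, ← Real.rpow_add hmδ]
    norm_num
  have key : (1-η*δ) ^ a * s ^ (-(a+1/2)) * (1-η*δ) ^ ((1:ℝ)/2)
      = τ ^ (2*a) * τ * (η*δ) ^ (a+1/2) := by
    rw [hsP, ← hτ2a, hτhalf]
    calc (1-η*δ) ^ a * ((1-η*δ) ^ (-(a+1/2)) * ((τ^2)^a * τ * (η*δ) ^ (a+1/2)))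
          * (1-η*δ) ^ ((1:ℝ)/2)
        = ((1-η*δ) ^ a * (1-η*δ) ^ (-(a+1/2)) * (1-η*δ) ^ ((1:ℝ)/2)) *
          ((τ^2)^a * τ * (η*δ) ^ (a+1/2)) := by ring
      _ = (τ^2)^a * τ * (η*δ) ^ (a+1/2) := by rw [hone, one_mul]
  have hE : E1 = Real.exp (-(η * (1 - δ) * x ^ 2) / 2) * E2 := by
    rw [hE1_def, hE2_def, ← Real.exp_add]
    congr 1
    ring
  have hinva : ((τ:ℝ)^2)^(-a) = (τ ^ (2*a))⁻¹ := by
    rw [Real.rpow_neg hτ2.le, hτ2a]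
  -- nonzero facts
  have hE2ne : E2 ≠ 0 := (Real.exp_pos _).ne'
  have hKne : K ≠ 0 := hK.ne'
  have hJne : J ≠ 0 := hJpos.ne'
  have hLsne : L s ≠ 0 := hLs.ne'
  have hτne : τ ≠ 0 := hτ.ne'
  have hτ2ane : τ ^ (2*a) ≠ 0 := (Real.rpow_pos_of_pos hτ _).ne'
  have hhalfne : ((1:ℝ)-η*δ) ^ ((1:ℝ)/2) ≠ 0 := (Real.rpow_pos_of_pos hmδ _).ne'
  have hane : (a + 1/2) ≠ 0 := by positivity
  have hsPne : s ^ (-(a+1/2)) ≠ 0 := (Real.rpow_pos_of_pos hs _).ne'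
  have hηδPne : (η*δ) ^ (a+1/2) ≠ 0 := (Real.rpow_pos_of_pos hηδ _).ne'
  rw [hE, hinva]
  field_simp
  rw [show ((2 * a + 1) / 2 : ℝ) = a + 1/2 by ring]
  linear_combination (-1:ℝ) * key
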